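/- The category of pre-nets has all small colimits; in particular, it has all finite colimits (including an initial object, binary coproducts, and coequalizers). -/

import Mathlib

open CategoryTheory CategoryTheory.Limits

/-- A pre-net: a type of places, a type of transitions, and source/target
functions assigning to each transition a list of places (an element of the
free monoid on places). -/
structure PreNet : Type 1 where
  S : Type
  T : Type
  src : T → List S
  tgt : T → List S

/-- A morphism of pre-nets: a pair of functions on places and transitions
commuting with the source and target maps. -/
@[ext]
structure PreNet.Hom (N M : PreNet) where
  f : N.S → M.S
  g : N.T → M.T
  src_comm : M.src ∘ g = List.map f ∘ N.src
  tgt_comm : M.tgt ∘ g = List.map f ∘ N.tgt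

instance : Category PreNet where
  Hom := PreNet.Hom
  id N := ⟨id, id, by funext t; simp, by funext t; simp⟩
  comp φ ψ :=
    ⟨ψ.f ∘ φ.f, ψ.g ∘ φ.g,
      by funext t
         have h1 := congrFun ψ.src_comm (φ.g t)
         have h2 := congrFun φ.src_comm t
         simp only [Function.comp] at *
         rw [h1, h2, List.map_map],
      by funext t
         have h1 := congrFun ψ.tgt_comm (φ.g t)
         have h2 := congrFun φ.tgt_comm t
         simp only [Function.comp] at *
         rw [h1, h2, List.map_map]⟩
  id_comp φ := PreNet.Hom.ext rfl rfl
  comp_id φ := PreNet.Hom.ext rfl rfl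
  assoc φ ψ χ := PreNet.Hom.ext rfl rfl

/-- The endofunctor `X ↦ List X × List X` on `Type`. -/
def listPair : Type ⥤ Type where
  obj X := List X × List X
  map f := TypeCat.ofHom (Prod.map (List.map f) (List.map f))
  map_id X := by refine ConcreteCategory.hom_ext _ _ fun p => ?_; cases p; simp [Prod.map, CategoryTheory.types_id]
  map_comp f g := by refine ConcreteCategory.hom_ext _ _ fun p => ?_; cases p; simp [Prod.map, CategoryTheory.types_comp]

/-- Pre-nets as a comma category. -/
def preNetToComma : PreNet ⥤ Comma (𝟭 Type) listPair where
  obj N := { left := N.T, right := N.S, hom := TypeCat.ofHom fun t => (N.src t, N.tgt t) }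
  map φ :=
    { left := TypeCat.ofHom φ.g
      right := TypeCat.ofHom φ.f
      w := by
        ext t
        exact Prod.ext (congrFun φ.src_comm t) (congrFun φ.tgt_comm t) }

/-- From the comma category back to pre-nets. -/
def commaToPreNet : Comma (𝟭 Type) listPair ⥤ PreNet where
  obj C := ⟨C.right, C.left, fun t => (C.hom t).1, fun t => (C.hom t).2⟩
  map ψ :=
    ⟨ψ.right, ψ.left,
      funext fun t => by
        have h := congrArg Prod.fst (ConcreteCategory.congr_hom ψ.w t)
        exact h,
      funext fun t => by
        have h := congrArg Prod.snd (ConcreteCategory.congr_hom ψ.w t)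
        exact h⟩

/-- The equivalence between pre-nets and the comma category. -/
def preNetEquiv : PreNet ≌ Comma (𝟭 Type) listPair where
  functor := preNetToComma
  inverse := commaToPreNet
  unitIso := NatIso.ofComponents (fun N => Iso.refl _) (by intros; rfl)
  counitIso := NatIso.ofComponents (fun C => Iso.refl _) (by intros; rfl)
  functor_unitIso_comp := by intros; rfl

/-- The category of pre-nets has all small colimits; in particular it has all
finite colimits, including an initial object, binary coproducts, and
coequalizers. -/
theorem preNet_hasColimits :
    HasColimits PreNet ∧ HasFiniteColimits PreNet ∧ HasInitial PreNet ∧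
      HasBinaryCoproducts PreNet ∧ HasCoequalizers PreNet := by
  haveI : HasColimits PreNet :=
    Adjunction.has_colimits_of_equivalence preNetEquiv.functor
  haveI : HasFiniteColimits PreNet := hasFiniteColimits_of_hasColimits PreNet
  exact ⟨inferInstance, inferInstance, inferInstance, inferInstance, inferInstance⟩
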